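/- Let T > 0 and 0 < ε < 1. Consider a partition of a finite set of jobs with positive sizes into m bags; call a job small if its size is at most ε²·T, and for each bag i let s_i be the total size of the small jobs in bag i. Suppose the small jobs are re-partitioned into groups ('merged jobs'), each group having total size at most 2ε²·T. Then there exists an assignment of the merged jobs to the m bags such that, for every bag i, the total size of the merged jobs assigned to bag i is at most s_i + 2ε²·T. -/
import Mathlib

open Finset

lemma greedy_assign {L m : ℕ} (hm : 0 < m) (q : Fin L → ℝ) (s : Fin m → ℝ)
    (B : ℝ) (hB : 0 ≤ B) (hq0 : ∀ g, 0 ≤ q g) (hqB : ∀ g, q g ≤ B)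
    (hs : ∀ i, 0 ≤ s i) :
    ∀ S : Finset (Fin L), (∑ g ∈ S, q g) ≤ (∑ i, s i) →
      ∃ A : Fin L → Fin m, ∀ i,
        (∑ g ∈ S.filter (fun g => A g = i), q g) ≤ s i + B := by
  intro S
  induction S using Finset.induction_on with
  | empty =>
    intro _
    exact ⟨fun _ => ⟨0, hm⟩, fun i => by simp [add_nonneg (hs i) hB]⟩
  | @insert a S ha IH =>
    intro htot
    have htot' : (∑ g ∈ S, q g) ≤ ∑ i, s i := by
      refine le_trans ?_ htot
      rw [Finset.sum_insert ha]
      linarith [hq0 a]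
    obtain ⟨A, hA⟩ := IH htot'
    -- find a bag whose current load is at most s i
    have hex : ∃ i₀ : Fin m, (∑ g ∈ S.filter (fun g => A g = i₀), q g) ≤ s i₀ := by
      by_contra hcon
      push_neg at hcon
      have hlt : (∑ i, s i) < ∑ i, ∑ g ∈ S.filter (fun g => A g = i), q g := by
        apply Finset.sum_lt_sum_of_nonempty
        · exact Finset.univ_nonempty_iff.mpr ⟨⟨0, hm⟩⟩
        · intro i _; exact hcon i
      have heq : (∑ i, ∑ g ∈ S.filter (fun g => A g = i), q g) = ∑ g ∈ S, q g :=
        Finset.sum_fiberwise _ _ _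
      rw [heq] at hlt
      linarith
    obtain ⟨i₀, hi₀⟩ := hex
    refine ⟨Function.update A a i₀, fun i => ?_⟩
    have hfil : ∀ i', S.filter (fun g => Function.update A a i₀ g = i')
        = S.filter (fun g => A g = i') := by
      intro i'
      apply Finset.filter_congr
      intro g hg
      have : g ≠ a := fun h => ha (h ▸ hg)
      simp [Function.update_of_ne this]
    by_cases hi : i = i₀
    · subst hi
      rw [Finset.filter_insert, if_pos (Function.update_self a i A),
        Finset.sum_insert (by simp [ha]), hfil]
      linarith [hqB a]
    · rw [Finset.filter_insert]
      have : ¬ (Function.update A a i₀ a = i) := by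
        simp [Function.update_self]; exact fun h => hi h.symm
      rw [if_neg this, hfil]
      exact hA i

theorem stmt19 (T ε : ℝ) (hT : 0 < T) (hε : 0 < ε) (hε1 : ε < 1)
    (n m L : ℕ) (hm : 0 < m)
    (p : Fin n → ℝ) (hp : ∀ j, 0 < p j)
    (σ : Fin n → Fin m) (G : Fin n → Fin L)
    (hgrp : ∀ g : Fin L,
      (∑ j ∈ Finset.univ.filter (fun j => p j ≤ ε ^ 2 * T ∧ G j = g), p j)
        ≤ 2 * ε ^ 2 * T) :
    ∃ A : Fin L → Fin m, ∀ i : Fin m,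
      (∑ g ∈ Finset.univ.filter (fun g => A g = i),
          ∑ j ∈ Finset.univ.filter (fun j => p j ≤ ε ^ 2 * T ∧ G j = g), p j)
        ≤ (∑ j ∈ Finset.univ.filter (fun j => σ j = i ∧ p j ≤ ε ^ 2 * T), p j)
            + 2 * ε ^ 2 * T := by
  set B := 2 * ε ^ 2 * T with hBdef
  have hB : 0 ≤ B := by positivity
  set q : Fin L → ℝ := fun g =>
    ∑ j ∈ Finset.univ.filter (fun j => p j ≤ ε ^ 2 * T ∧ G j = g), p j with hqdef
  set s : Fin m → ℝ := fun i =>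
    ∑ j ∈ Finset.univ.filter (fun j => σ j = i ∧ p j ≤ ε ^ 2 * T), p j with hsdef
  have hq0 : ∀ g, 0 ≤ q g := fun g =>
    Finset.sum_nonneg fun j _ => (hp j).le
  have hs0 : ∀ i, 0 ≤ s i := fun i =>
    Finset.sum_nonneg fun j _ => (hp j).le
  have htot : (∑ g, q g) ≤ ∑ i, s i := by
    have h1 : (∑ g, q g)
        = ∑ j ∈ Finset.univ.filter (fun j => p j ≤ ε ^ 2 * T), p j := by
      rw [hqdef]
      have : ∀ g : Fin L,
          Finset.univ.filter (fun j => p j ≤ ε ^ 2 * T ∧ G j = g)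
          = (Finset.univ.filter (fun j => p j ≤ ε ^ 2 * T)).filter
              (fun j => G j = g) := by
        intro g; rw [Finset.filter_filter]
      simp only [this]
      exact Finset.sum_fiberwise _ _ _
    have h2 : (∑ i, s i)
        = ∑ j ∈ Finset.univ.filter (fun j => p j ≤ ε ^ 2 * T), p j := by
      rw [hsdef]
      have : ∀ i : Fin m,
          Finset.univ.filter (fun j => σ j = i ∧ p j ≤ ε ^ 2 * T)
          = (Finset.univ.filter (fun j => p j ≤ ε ^ 2 * T)).filter
              (fun j => σ j = i) := by
        intro i
        rw [Finset.filter_filter]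
        apply Finset.filter_congr
        intro j _
        tauto
      simp only [this]
      exact Finset.sum_fiberwise _ _ _
    rw [h1, h2]
  obtain ⟨A, hA⟩ := greedy_assign hm q s B hB hq0 hgrp hs0 Finset.univ htot
  exact ⟨A, fun i => hA i⟩
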